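/- Join correctness for bidirectional dynamic programming: given a forward label l^f = (i, c^f, S^f, R^f) for a partial path from s to i and a backward label l^b = (j, c^b, S^b, R^b) for a partial path from j to d, if (i,j) ∈ A, S^f ∩ S^b = ∅, and R^f + r_{ij} + R^b ≤ U componentwise, then the concatenated walk from s to d is an elementary path of cost c^f + c_{ij} + c^b that satisfies all resource constraints. -/

import Mathlib

/-- Cost of a walk given as a list of visited nodes. -/
def walkCost {V : Type} (c : V → V → ℝ) (p : List V) : ℝ :=
  ((p.zip p.tail).map fun q => c q.1 q.2).sum

/-- Consumption of resource `t` along a walk. -/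
def walkRes {V : Type} {k : ℕ} (r : V → V → Fin k → ℝ) (p : List V) (t : Fin k) : ℝ :=
  ((p.zip p.tail).map fun q => r q.1 q.2 t).sum

/-- A walk from `s` to `d`. -/
def IsWalk {V : Type} (A : V → V → Prop) (s d : V) (p : List V) : Prop :=
  p.Chain' A ∧ p.head? = some s ∧ p.getLast? = some d

lemma walkSum_append {V : Type} (f : V → V → ℝ) (i j : V) :
    ∀ (p q : List V), p.getLast? = some i → q.head? = some j →
    ((((p ++ q).zip (p ++ q).tail).map fun x => f x.1 x.2).sum) =
      (((p.zip p.tail).map fun x => f x.1 x.2).sum) + f i j +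
      (((q.zip q.tail).map fun x => f x.1 x.2).sum)
  | [], q, hp, hq => by simp at hp
  | [a], q, hp, hq => by
      obtain ⟨b, q', rfl⟩ : ∃ b q', q = b :: q' := by
        cases q with
        | nil => simp at hq
        | cons b q' => exact ⟨b, q', rfl⟩
      simp_all
  | a :: b :: p, q, hp, hq => by
      have ih := walkSum_append f i j (b :: p) q (by simpa using hp) hq
      simp only [List.cons_append, List.zip_cons_cons, List.tail_cons, List.map_cons,
        List.sum_cons] at *
      rw [ih]; ring

theorem stmt3 {V : Type} [DecidableEq V] {k : ℕ}
    (A : V → V → Prop) (c : V → V → ℝ) (r : V → V → Fin k → ℝ) (U : Fin k → ℝ)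
    (hr : ∀ u v t, 0 ≤ r u v t)
    (s d i j : V) (pf pb : List V) (cf cb : ℝ)
    (Sf Sb : Finset V) (Rf Rb : Fin k → ℝ)
    -- the forward label encodes pf
    (hpf : IsWalk A s i pf) (hpfel : pf.Nodup) (hSf : pf.toFinset = Sf)
    (hcf : walkCost c pf = cf) (hRf : ∀ t, walkRes r pf t = Rf t)
    -- the backward label encodes pb
    (hpb : IsWalk A j d pb) (hpbel : pb.Nodup) (hSb : pb.toFinset = Sb)
    (hcb : walkCost c pb = cb) (hRb : ∀ t, walkRes r pb t = Rb t)
    -- join conditions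
    (harc : A i j) (hdisj : Sf ∩ Sb = ∅)
    (hres : ∀ t, Rf t + r i j t + Rb t ≤ U t) :
    IsWalk A s d (pf ++ pb) ∧ (pf ++ pb).Nodup ∧
      walkCost c (pf ++ pb) = cf + c i j + cb ∧
      ∀ t, walkRes r (pf ++ pb) t ≤ U t := by
  obtain ⟨hcf1, hhf, hlf⟩ := hpf
  obtain ⟨hcb1, hhb, hlb⟩ := hpb
  have hpfne : pf ≠ [] := by intro h; subst h; simp at hhf
  have hpbne : pb ≠ [] := by intro h; subst h; simp at hhb
  refine ⟨⟨?_, ?_, ?_⟩, ?_, ?_, ?_⟩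
  · show List.IsChain A (pf ++ pb)
    rw [List.isChain_append]
    refine ⟨hcf1, hcb1, fun x hx y hy => ?_⟩
    rw [hlf] at hx; rw [hhb] at hy
    simp at hx hy; subst hx; subst hy; exact harc
  · rwa [List.head?_append_of_ne_nil _ hpfne]
  · rwa [List.getLast?_append_of_ne_nil _ hpbne]
  · rw [List.nodup_append]
    refine ⟨hpfel, hpbel, fun x hx y hx2 (hxy : x = y) => ?_⟩
    subst hxy
    have : x ∈ Sf ∩ Sb := by
      rw [← hSf, ← hSb]; simp [Finset.mem_inter, List.mem_toFinset, hx, hx2]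
    rw [hdisj] at this; simp at this
  · rw [show walkCost c (pf ++ pb) = walkCost c pf + c i j + walkCost c pb from
      walkSum_append c i j pf pb hlf hhb, hcf, hcb]
  · intro t
    rw [show walkRes r (pf ++ pb) t = walkRes r pf t + r i j t + walkRes r pb t from
      walkSum_append (fun u v => r u v t) i j pf pb hlf hhb, hRf, hRb]
    exact hres t
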